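/- Consider one step of the k-means (Lloyd) algorithm in which a k-clustering S = (S₁, …, S_k) of a finite point set 𝒳 ⊂ ℝ^d, whose current centers are the centroids c(S₁), …, c(S_k), is changed to the k-clustering S′ = (S′₁, …, S′_k) by reassigning each point to (the cluster of) its nearest current center and then moving each center to the centroid of its new cluster. Then, writing φ(S) = ∑_{j=1}^k ∑_{x∈S_j} ‖x − c(S_j)‖² and φ(S′) = ∑_{j=1}^k ∑_{x∈S′_j} ‖x − c(S′_j)‖², the decrease in potential satisfies φ(S) − φ(S′) ≥ ∑_{j=1}^k |S′_j| · ‖c(S′_j) − c(S_j)‖². Formally: if (S_j)_{j=1..k} and (S′_j)_{j=1..k} are two partitions of 𝒳 into (possibly empty, but with each S_j and each S′_j nonempty whenever it appears in the sums) finite sets such that every x ∈ S′_j satisfies ‖x − c(S_j)‖ ≤ ‖x − c(S_i)‖ for all i = 1, …, k, then the above inequality holds, where c(A) denotes the centroid of a nonempty finite set A. -/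

import Mathlib

/-- The centroid (center of mass) of a finite set of points in `ℝ^d`. -/
noncomputable def centroid {d : ℕ} (S : Finset (EuclideanSpace ℝ (Fin d))) :
    EuclideanSpace ℝ (Fin d) :=
  ((S.card : ℝ)⁻¹) • ∑ x ∈ S, x

lemma sum_sub_centroid {d : ℕ} (A : Finset (EuclideanSpace ℝ (Fin d))) (hA : A.Nonempty) :
    ∑ x ∈ A, (x - centroid A) = 0 := by
  have hc : (A.card : ℝ) ≠ 0 := by
    exact_mod_cast Finset.card_ne_zero.mpr hA
  have key : (A.card : ℝ) • centroid A = ∑ x ∈ A, x := by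
    rw [centroid, smul_smul, mul_inv_cancel₀ hc, one_smul]
  rw [Finset.sum_sub_distrib, Finset.sum_const, ← Nat.cast_smul_eq_nsmul ℝ, key, sub_self]

lemma bias_var {d : ℕ} (A : Finset (EuclideanSpace ℝ (Fin d))) (hA : A.Nonempty)
    (z : EuclideanSpace ℝ (Fin d)) :
    ∑ x ∈ A, ‖x - z‖ ^ 2
      = ∑ x ∈ A, ‖x - centroid A‖ ^ 2 + (A.card : ℝ) * ‖centroid A - z‖ ^ 2 := by
  set c := centroid A with hc
  have h1 : ∀ x ∈ A, ‖x - z‖ ^ 2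
      = ‖x - c‖ ^ 2 + 2 * (inner ℝ (x - c) (c - z) : ℝ) + ‖c - z‖ ^ 2 := by
    intro x _
    have : x - z = (x - c) + (c - z) := by abel
    rw [this, norm_add_sq_real]
  rw [Finset.sum_congr rfl h1]
  rw [Finset.sum_add_distrib, Finset.sum_add_distrib, Finset.sum_const, ← Finset.mul_sum,
    ← sum_inner, sum_sub_centroid A hA, inner_zero_left, mul_zero, add_zero,
    nsmul_eq_mul]

lemma sum_partition {d k : ℕ} (𝒳 : Finset (EuclideanSpace ℝ (Fin d)))
    (P : Fin k → Finset (EuclideanSpace ℝ (Fin d)))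
    (hsub : ∀ j, P j ⊆ 𝒳) (hpart : ∀ x ∈ 𝒳, ∃! j : Fin k, x ∈ P j)
    (f : EuclideanSpace ℝ (Fin d) → ℝ) :
    ∑ j : Fin k, ∑ x ∈ P j, f x = ∑ x ∈ 𝒳, f x := by
  letI : DecidableEq (EuclideanSpace ℝ (Fin d)) := Classical.decEq _
  have hdisj : ∀ i ∈ (Finset.univ : Finset (Fin k)), ∀ j ∈ Finset.univ,
      i ≠ j → Disjoint (P i) (P j) := by
    intro i _ j _ hij
    refine Finset.disjoint_left.mpr fun x hxi hxj => hij ?_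
    obtain ⟨l, _, hl⟩ := hpart x (hsub i hxi)
    exact (hl i hxi).trans (hl j hxj).symm
  rw [← Finset.sum_biUnion hdisj]
  congr 1
  ext x
  simp only [Finset.mem_biUnion, Finset.mem_univ, true_and]
  constructor
  · rintro ⟨j, hj⟩; exact hsub j hj
  · intro hx; obtain ⟨j, hj, -⟩ := hpart x hx; exact ⟨j, hj⟩

/-- **One k-means (Lloyd) step does not increase the potential, quantitatively.**
If `(S j)` and `(S' j)`, `j = 1, …, k`, are partitions of a finite set
`𝒳 ⊂ ℝ^d` into nonempty clusters, the current centers are the centroids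
`c(S j)`, and `S'` is obtained by reassigning every point of `𝒳` to (the
cluster of) its nearest current center, then
`φ(S) − φ(S') ≥ ∑_j |S'_j| · ‖c(S'_j) − c(S_j)‖²`,
where `φ(S) = ∑_j ∑_{x ∈ S_j} ‖x − c(S_j)‖²`. -/
theorem kmeans_step_potential_decrease {d k : ℕ}
    (𝒳 : Finset (EuclideanSpace ℝ (Fin d)))
    (S S' : Fin k → Finset (EuclideanSpace ℝ (Fin d)))
    (hSsub : ∀ j, S j ⊆ 𝒳) (hS'sub : ∀ j, S' j ⊆ 𝒳)
    (hSpart : ∀ x ∈ 𝒳, ∃! j : Fin k, x ∈ S j)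
    (hS'part : ∀ x ∈ 𝒳, ∃! j : Fin k, x ∈ S' j)
    (hSne : ∀ j, (S j).Nonempty) (hS'ne : ∀ j, (S' j).Nonempty)
    (hnear : ∀ j : Fin k, ∀ x ∈ S' j, ∀ i : Fin k,
      ‖x - centroid (S j)‖ ≤ ‖x - centroid (S i)‖) :
    (∑ j : Fin k, ∑ x ∈ S j, ‖x - centroid (S j)‖ ^ 2)
      - (∑ j : Fin k, ∑ x ∈ S' j, ‖x - centroid (S' j)‖ ^ 2)
      ≥ ∑ j : Fin k, ((S' j).card : ℝ) * ‖centroid (S' j) - centroid (S j)‖ ^ 2 := by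
  classical
  -- the "cost of x in the old clustering" function
  set m : EuclideanSpace ℝ (Fin d) → ℝ :=
    fun x => ∑ j : Fin k, if x ∈ S j then ‖x - centroid (S j)‖ ^ 2 else 0 with hm
  have hmval : ∀ x ∈ 𝒳, ∀ i : Fin k, x ∈ S i → m x = ‖x - centroid (S i)‖ ^ 2 := by
    intro x hx i hxi
    obtain ⟨l, hl, hluniq⟩ := hSpart x hx
    show (∑ j : Fin k, if x ∈ S j then ‖x - centroid (S j)‖ ^ 2 else 0) = _
    rw [Finset.sum_eq_single i (fun j _ hji => by
      have hxn : x ∉ S j := fun hxj => hji ((hluniq j hxj).trans (hluniq i hxi).symm)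
      simp [hxn]) (by simp)]
    simp [hxi]
  -- φ(S) = ∑_{x ∈ 𝒳} m x
  have hA : (∑ j : Fin k, ∑ x ∈ S j, ‖x - centroid (S j)‖ ^ 2) = ∑ x ∈ 𝒳, m x := by
    rw [← sum_partition 𝒳 S hSsub hSpart m]
    refine Finset.sum_congr rfl fun j _ => Finset.sum_congr rfl fun x hx => ?_
    exact (hmval x (hSsub j hx) j hx).symm
  -- the reassignment step does not increase cost
  have hB : (∑ j : Fin k, ∑ x ∈ S' j, ‖x - centroid (S j)‖ ^ 2) ≤ ∑ x ∈ 𝒳, m x := by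
    rw [← sum_partition 𝒳 S' hS'sub hS'part m]
    refine Finset.sum_le_sum fun j _ => Finset.sum_le_sum fun x hx => ?_
    obtain ⟨i, hi, -⟩ := hSpart x (hS'sub j hx)
    rw [hmval x (hS'sub j hx) i hi]
    exact pow_le_pow_left₀ (norm_nonneg _) (hnear j x hx i) 2
  -- bias-variance decomposition for each new cluster
  have hbv : (∑ j : Fin k, ∑ x ∈ S' j, ‖x - centroid (S j)‖ ^ 2)
      = (∑ j : Fin k, ∑ x ∈ S' j, ‖x - centroid (S' j)‖ ^ 2)
        + ∑ j : Fin k, ((S' j).card : ℝ) * ‖centroid (S' j) - centroid (S j)‖ ^ 2 := by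
    rw [← Finset.sum_add_distrib]
    exact Finset.sum_congr rfl fun j _ => bias_var (S' j) (hS'ne j) (centroid (S j))
  rw [hA]
  linarith [hB, hbv]
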